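/- arXiv:1308.2720 — 10 statements merged into one kernel-verified Lean document; each statement's English description precedes it below -/
import Mathlib

section
/- The double integral over the unit square of 1/(1-xy) equals ζ(2), i.e. ∫₀¹∫₀¹ 1/(1-xy) dx dy = ζ(2) = π²/6. -/
open Real MeasureTheory

lemma beukers_pow_integral (c : ℝ) (n : ℕ) :
    ∫ t in Set.Ioc (0:ℝ) 1, c * t ^ n = c / (n + 1) := by
  rw [← intervalIntegral.integral_of_le (by norm_num : (0:ℝ) ≤ 1)]
  rw [intervalIntegral.integral_const_mul, integral_pow]
  simp [div_eq_mul_inv, mul_comm]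

lemma beukers_inner (x : ℝ) (hx0 : 0 ≤ x) (hx1 : x < 1) :
    (∫ y in (0:ℝ)..1, 1 / (1 - x * y)) = ∑' n : ℕ, x ^ n / (n + 1) := by
  rw [intervalIntegral.integral_of_le (by norm_num : (0:ℝ) ≤ 1)]
  have key : ∀ y ∈ Set.Ioc (0:ℝ) 1, 1 / (1 - x * y) = ∑' n : ℕ, x ^ n * y ^ n := by
    intro y hy
    have h0 : 0 ≤ x * y := mul_nonneg hx0 (le_of_lt hy.1)
    have h1 : x * y < 1 := lt_of_le_of_lt (mul_le_of_le_one_right hx0 hy.2) hx1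
    rw [one_div, ← tsum_geometric_of_lt_one h0 h1]
    exact tsum_congr fun n => (mul_pow x y n)
  rw [setIntegral_congr_fun measurableSet_Ioc key]
  rw [← MeasureTheory.integral_tsum_of_summable_integral_norm]
  · exact tsum_congr fun n => by
      rw [show (fun y : ℝ => x ^ n * y ^ n) = (fun y => x ^ n * y ^ n) from rfl,
        beukers_pow_integral]
  · intro n
    apply Continuous.integrableOn_Ioc
    continuity
  · have : ∀ n : ℕ, (∫ y in Set.Ioc (0:ℝ) 1, ‖x ^ n * y ^ n‖) = x ^ n / (n + 1) := by
      intro n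
      rw [← beukers_pow_integral (x ^ n) n]
      refine setIntegral_congr_fun measurableSet_Ioc fun y hy => ?_
      rw [norm_of_nonneg (mul_nonneg (pow_nonneg hx0 n) (pow_nonneg (le_of_lt hy.1) n))]
    simp_rw [this]
    apply Summable.of_nonneg_of_le
      (fun n => div_nonneg (pow_nonneg hx0 n) (by positivity))
      (fun n => ?_) (summable_geometric_of_lt_one hx0 hx1)
    exact div_le_self (pow_nonneg hx0 n) (by norm_num [Nat.cast_nonneg])

theorem beukers_integral_zeta_two :
    (∫ x in (0:ℝ)..1, ∫ y in (0:ℝ)..1, 1 / (1 - x * y)) = π ^ 2 / 6 := by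
  have hae : ∀ᵐ x : ℝ, x ∈ Set.Ioc (0:ℝ) 1 →
      (∫ y in (0:ℝ)..1, 1 / (1 - x * y)) = ∑' n : ℕ, x ^ n / (n + 1) := by
    filter_upwards [measure_eq_zero_iff_ae_notMem.mp (volume_singleton (a := (1:ℝ)))] with x hx1 hx
    exact beukers_inner x (le_of_lt hx.1) (lt_of_le_of_ne hx.2 (by simpa using hx1))
  rw [intervalIntegral.integral_of_le (by norm_num : (0:ℝ) ≤ 1),
    setIntegral_congr_ae measurableSet_Ioc hae]
  have hterm : ∀ n : ℕ, (∫ x in Set.Ioc (0:ℝ) 1, x ^ n / (n + 1)) = 1 / ((n:ℝ) + 1) ^ 2 := by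
    intro n
    have : (fun x : ℝ => x ^ n / (n + 1)) = fun x : ℝ => (1 / ((n:ℝ)+1)) * x ^ n := by
      funext x; ring
    rw [this, beukers_pow_integral]
    rw [div_div, one_div, sq]
    rw [one_div]
  rw [← MeasureTheory.integral_tsum_of_summable_integral_norm]
  · have hs : HasSum (fun n : ℕ => 1 / ((n:ℝ) + 1) ^ 2) (π ^ 2 / 6) := by
      have := (hasSum_nat_add_iff' (f := fun n : ℕ => (1:ℝ) / (n:ℝ) ^ 2) 1).mpr
        hasSum_zeta_two
      simpa using this
    rw [tsum_congr hterm, hs.tsum_eq]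
  · intro n
    apply Continuous.integrableOn_Ioc
    continuity
  · have : ∀ n : ℕ, (∫ x in Set.Ioc (0:ℝ) 1, ‖x ^ n / ((n:ℝ) + 1)‖) = 1 / ((n:ℝ) + 1) ^ 2 := by
      intro n
      rw [← hterm n]
      refine setIntegral_congr_fun measurableSet_Ioc fun x hx => ?_
      rw [norm_of_nonneg (div_nonneg (pow_nonneg (le_of_lt hx.1) n) (by positivity))]
    simp_rw [this]
    exact (summable_nat_add_iff 1).mpr (Real.summable_one_div_nat_pow.mpr one_lt_two)
      |>.congr (fun n => by push_cast; ring_nf)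
end

section
/- For nonnegative integers r, s with r ≠ s, ∫₀¹∫₀¹ xʳyˢ/(1-xy) dx dy = (H_r - H_s)/(r - s), where H_n = ∑_{k=1}^{n} 1/k is the n-th harmonic number (H_0 = 0). -/
open MeasureTheory Filter Finset

lemma telescope_hasSum (g : ℕ → ℝ) (d : ℕ) (hg0 : Tendsto g atTop (nhds 0))
    (hmono : Antitone g) (hnn : ∀ n, 0 ≤ g n) :
    HasSum (fun n => g n - g (n + d)) (∑ k ∈ Finset.range d, g k) := by
  rw [hasSum_iff_tendsto_nat_of_nonneg
    (fun n => sub_nonneg.2 (hmono (Nat.le_add_right _ _)))]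
  have key : ∀ N, ∑ n ∈ Finset.range N, (g n - g (n + d)) =
      ∑ k ∈ Finset.range d, g k - ∑ k ∈ Finset.Ico N (N + d), g k := by
    intro N
    rw [Finset.sum_sub_distrib]
    have h1 : ∑ n ∈ Finset.range N, g (n + d) = ∑ k ∈ Finset.Ico d (N + d), g k := by
      rw [Finset.sum_Ico_eq_sum_range]
      simp [add_comm, Nat.add_sub_cancel]
    have h2 : ∑ k ∈ Finset.range d, g k + ∑ k ∈ Finset.Ico d (N + d), g k
        = ∑ k ∈ Finset.range (N + d), g k := by
      simp only [Finset.range_eq_Ico]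
      exact Finset.sum_Ico_consecutive _ (Nat.zero_le _) (Nat.le_add_left _ _)
    have h3 : ∑ k ∈ Finset.range N, g k + ∑ k ∈ Finset.Ico N (N + d), g k
        = ∑ k ∈ Finset.range (N + d), g k := by
      simp only [Finset.range_eq_Ico]
      exact Finset.sum_Ico_consecutive _ (Nat.zero_le _) (Nat.le_add_right _ _)
    linarith [h1, h2, h3]
  simp_rw [key]
  have : Tendsto (fun N => ∑ k ∈ Finset.Ico N (N + d), g k) atTop (nhds 0) := by
    apply squeeze_zero (fun N => Finset.sum_nonneg fun k _ => hnn k)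
      (fun N => ?_) (by simpa using hg0.const_mul (d : ℝ))
    calc ∑ k ∈ Finset.Ico N (N + d), g k ≤ ∑ k ∈ Finset.Ico N (N + d), g N :=
          Finset.sum_le_sum fun k hk => hmono (Finset.mem_Ico.1 hk).1
      _ = (d : ℝ) * g N := by simp [mul_comm]
  simpa using (tendsto_const_nhds.sub this)

lemma tsum_frac (s d : ℕ) (hd : 0 < d) :
    ∑' n : ℕ, 1 / (((s : ℝ) + d + n + 1) * ((s : ℝ) + n + 1)) =
      (∑ k ∈ Finset.Ioc s (s + d), 1 / (k : ℝ)) / d := by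
  set g : ℕ → ℝ := fun n => 1 / ((n : ℝ) + s + 1) with hg
  have hpos : ∀ n : ℕ, (0:ℝ) < (n : ℝ) + s + 1 := fun n => by positivity
  have hg0 : Tendsto g atTop (nhds 0) := by
    have h1 : Tendsto (fun n : ℕ => ((n : ℝ) + s + 1)) atTop atTop :=
      tendsto_atTop_add_const_right _ _ (tendsto_atTop_add_const_right _ _ tendsto_natCast_atTop_atTop)
    simpa [hg, one_div, Function.comp_def] using tendsto_inv_atTop_zero.comp h1
  have hmono : Antitone g := by
    intro a b hab
    apply one_div_le_one_div_of_le (hpos a)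
    have : (a:ℝ) ≤ b := Nat.cast_le.2 hab
    linarith
  have hnn : ∀ n, 0 ≤ g n := fun n => le_of_lt (by positivity)
  have hts := (telescope_hasSum g d hg0 hmono hnn).tsum_eq
  have heq : ∀ n : ℕ, 1 / (((s : ℝ) + d + n + 1) * ((s : ℝ) + n + 1))
      = (g n - g (n + d)) / d := by
    intro n
    have h1 := hpos n
    have h2 : (0:ℝ) < (n:ℝ) + s + d + 1 := by positivity
    have hd' : (0:ℝ) < d := Nat.cast_pos.2 hd
    rw [hg]
    push_cast
    field_simp
    ring
  calc ∑' n : ℕ, 1 / (((s : ℝ) + d + n + 1) * ((s : ℝ) + n + 1))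
      = ∑' n : ℕ, (g n - g (n + d)) / d := by rw [tsum_congr heq]
    _ = (∑' n : ℕ, (g n - g (n + d))) / d := tsum_div_const
    _ = (∑ k ∈ Finset.range d, g k) / d := by rw [hts]
    _ = (∑ k ∈ Finset.Ioc s (s + d), 1 / (k : ℝ)) / d := by
        congr 1
        rw [← Finset.Ico_add_one_add_one_eq_Ioc, Finset.sum_Ico_eq_sum_range]
        have hdd : s + d + 1 - (s + 1) = d := by omega
        rw [hdd]
        simp only [hg]
        apply Finset.sum_congr rfl fun k _ => ?_
        push_cast
        ring_nf

lemma int_Ioo_pow (n : ℕ) : ∫ y in Set.Ioo (0:ℝ) 1, y ^ n = 1 / ((n : ℝ) + 1) := by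
  rw [← MeasureTheory.integral_Ioc_eq_integral_Ioo,
    ← intervalIntegral.integral_of_le zero_le_one, integral_pow]
  simp

lemma inner_eq (r s : ℕ) {x : ℝ} (hx : x ∈ Set.Ioo (0:ℝ) 1) :
    (∫ y in (0:ℝ)..1, x ^ r * y ^ s / (1 - x * y)) =
      ∑' n : ℕ, x ^ (r + n) / ((s : ℝ) + n + 1) := by
  obtain ⟨hx0, hx1⟩ := hx
  rw [intervalIntegral.integral_of_le zero_le_one,
    MeasureTheory.integral_Ioc_eq_integral_Ioo]
  have hcongr : Set.EqOn (fun y : ℝ => x ^ r * y ^ s / (1 - x * y))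
      (fun y : ℝ => ∑' n : ℕ, x ^ (r + n) * y ^ (s + n)) (Set.Ioo 0 1) := by
    intro y hy
    obtain ⟨hy0, hy1⟩ := hy
    have hxy : x * y < 1 := by nlinarith
    have hxy0 : 0 ≤ x * y := by positivity
    simp only
    rw [show (fun n : ℕ => x ^ (r + n) * y ^ (s + n)) =
        (fun n : ℕ => (x ^ r * y ^ s) * (x * y) ^ n) from funext fun n => by
          rw [pow_add, pow_add, mul_pow]; ring,
      tsum_mul_left, tsum_geometric_of_lt_one hxy0 hxy, div_eq_mul_inv]
  rw [MeasureTheory.setIntegral_congr_fun measurableSet_Ioo hcongr]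
  have hint : ∀ n : ℕ, MeasureTheory.Integrable (fun y : ℝ => x ^ (r + n) * y ^ (s + n))
      (MeasureTheory.volume.restrict (Set.Ioo 0 1)) := fun n =>
    ((continuous_const.mul (continuous_pow _)).integrableOn_Icc (a := (0:ℝ)) (b := 1)).mono_set
      Set.Ioo_subset_Icc_self
  have hval : ∀ n : ℕ, (∫ y in Set.Ioo (0:ℝ) 1, ‖x ^ (r + n) * y ^ (s + n)‖) =
      x ^ (r + n) / ((s : ℝ) + n + 1) := by
    intro n
    have : Set.EqOn (fun y : ℝ => ‖x ^ (r + n) * y ^ (s + n)‖)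
        (fun y : ℝ => x ^ (r + n) * y ^ (s + n)) (Set.Ioo 0 1) := by
      intro y hy
      obtain ⟨hy0, hy1⟩ := hy
      simp only [Real.norm_eq_abs, abs_of_nonneg (by positivity : (0:ℝ) ≤ x ^ (r+n) * y ^ (s+n))]
    rw [MeasureTheory.setIntegral_congr_fun measurableSet_Ioo this,
      MeasureTheory.integral_const_mul, int_Ioo_pow]
    push_cast
    ring
  have hsum : Summable fun n : ℕ => ∫ y in Set.Ioo (0:ℝ) 1, ‖x ^ (r + n) * y ^ (s + n)‖ := by
    simp only [hval]
    apply Summable.of_nonneg_of_le (fun n => by positivity) (fun n => ?_)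
      (summable_geometric_of_lt_one hx0.le hx1)
    calc x ^ (r + n) / ((s : ℝ) + n + 1) ≤ x ^ (r + n) / 1 := by
          apply div_le_div_of_nonneg_left (by positivity) one_pos
          linarith [Nat.cast_nonneg (α := ℝ) s, Nat.cast_nonneg (α := ℝ) n]
      _ = x ^ (r + n) := div_one _
      _ ≤ x ^ n := pow_le_pow_of_le_one hx0.le hx1.le (Nat.le_add_left _ _)
  rw [← MeasureTheory.integral_tsum_of_summable_integral_norm hint hsum]
  apply tsum_congr fun n => ?_
  rw [MeasureTheory.integral_const_mul, int_Ioo_pow]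
  push_cast; ring

lemma main_sum (r s : ℕ) :
    (∫ x in (0:ℝ)..1, ∫ y in (0:ℝ)..1, x ^ r * y ^ s / (1 - x * y)) =
      ∑' n : ℕ, 1 / (((r : ℝ) + n + 1) * ((s : ℝ) + n + 1)) := by
  rw [intervalIntegral.integral_of_le zero_le_one,
    MeasureTheory.integral_Ioc_eq_integral_Ioo,
    MeasureTheory.setIntegral_congr_fun measurableSet_Ioo
      (fun x hx => inner_eq r s hx)]
  have hint : ∀ n : ℕ, MeasureTheory.Integrable (fun x : ℝ => x ^ (r + n) / ((s : ℝ) + n + 1))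
      (MeasureTheory.volume.restrict (Set.Ioo 0 1)) := fun n =>
    (((continuous_pow _).div_const _).integrableOn_Icc (a := (0:ℝ)) (b := 1)).mono_set
      Set.Ioo_subset_Icc_self
  have hc : ∀ n : ℕ, (0:ℝ) < (s : ℝ) + n + 1 := fun n => by positivity
  have hval : ∀ n : ℕ, (∫ x in Set.Ioo (0:ℝ) 1, ‖x ^ (r + n) / ((s : ℝ) + n + 1)‖) =
      1 / (((r : ℝ) + n + 1) * ((s : ℝ) + n + 1)) := by
    intro n
    have : Set.EqOn (fun x : ℝ => ‖x ^ (r + n) / ((s : ℝ) + n + 1)‖)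
        (fun x : ℝ => (1 / ((s : ℝ) + n + 1)) * x ^ (r + n)) (Set.Ioo 0 1) := by
      intro x hx
      obtain ⟨hx0, hx1⟩ := hx
      have h1 := hc n
      simp only [Real.norm_eq_abs,
        abs_of_nonneg (by positivity : (0:ℝ) ≤ x ^ (r+n) / ((s:ℝ)+n+1))]
      ring
    rw [MeasureTheory.setIntegral_congr_fun measurableSet_Ioo this,
      MeasureTheory.integral_const_mul, int_Ioo_pow]
    have h1 := hc n
    have h2 : (0:ℝ) < (r : ℝ) + n + 1 := by positivity
    field_simp
    push_cast
    ring
  have hsum : Summable fun n : ℕ => ∫ x in Set.Ioo (0:ℝ) 1, ‖x ^ (r + n) / ((s : ℝ) + n + 1)‖ := by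
    simp only [hval]
    have hbase : Summable fun n : ℕ => 1 / ((n : ℝ) + 1) ^ 2 := by
      have := (Real.summable_one_div_nat_pow (p := 2)).2 one_lt_two
      rw [← summable_nat_add_iff 1] at this
      simpa using this
    apply Summable.of_nonneg_of_le (fun n => by positivity) (fun n => ?_) hbase
    have h1 := hc n
    have h2 : (0:ℝ) < (r : ℝ) + n + 1 := by positivity
    have h3 : ((n : ℝ) + 1) ^ 2 ≤ ((r : ℝ) + n + 1) * ((s : ℝ) + n + 1) := by
      have hr := Nat.cast_nonneg (α := ℝ) r
      have hs := Nat.cast_nonneg (α := ℝ) s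
      nlinarith [Nat.cast_nonneg (α := ℝ) n]
    exact one_div_le_one_div_of_le (by positivity) h3
  rw [← MeasureTheory.integral_tsum_of_summable_integral_norm hint hsum]
  refine tsum_congr fun n => ?_
  rw [← hval n]
  apply MeasureTheory.setIntegral_congr_fun measurableSet_Ioo
  intro x hx
  obtain ⟨hx0, hx1⟩ := hx
  have h1 := hc n
  simp only [Real.norm_eq_abs, abs_of_nonneg (by positivity : (0:ℝ) ≤ x ^ (r+n) / ((s:ℝ)+n+1))]

lemma final_lt (r s : ℕ) (h : s < r) :
    ∑' n : ℕ, 1 / (((r : ℝ) + n + 1) * ((s : ℝ) + n + 1)) =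
      ((∑ k ∈ Finset.Icc 1 r, 1 / (k : ℝ)) - ∑ k ∈ Finset.Icc 1 s, 1 / (k : ℝ)) /
        ((r : ℝ) - (s : ℝ)) := by
  have hd : 0 < r - s := by omega
  have hcast : ((r - s : ℕ) : ℝ) = (r : ℝ) - s := by
    rw [Nat.cast_sub h.le]
  have key := tsum_frac s (r - s) hd
  rw [hcast, Nat.add_sub_cancel' h.le] at key
  have harm : (∑ k ∈ Finset.Icc 1 r, 1 / (k : ℝ)) - ∑ k ∈ Finset.Icc 1 s, 1 / (k : ℝ) =
      ∑ k ∈ Finset.Ioc s r, 1 / (k : ℝ) := by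
    have h1 : Finset.Icc 1 r = Finset.Ioc 0 r := by rw [← Finset.Icc_add_one_left_eq_Ioc, zero_add]
    have h2 : Finset.Icc 1 s = Finset.Ioc 0 s := by rw [← Finset.Icc_add_one_left_eq_Ioc, zero_add]
    rw [h1, h2, ← Finset.sum_Ioc_consecutive _ (Nat.zero_le s) h.le]
    ring
  rw [harm, ← key]
  exact tsum_congr fun n => by rw [show (s:ℝ) + ((r:ℝ) - s) + n + 1 = (r:ℝ) + n + 1 by ring]

theorem beukers_Irs (r s : ℕ) (hrs : r ≠ s) :
    (∫ x in (0:ℝ)..1, ∫ y in (0:ℝ)..1, x ^ r * y ^ s / (1 - x * y)) =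
      ((∑ k ∈ Finset.Icc 1 r, 1 / (k : ℝ)) - ∑ k ∈ Finset.Icc 1 s, 1 / (k : ℝ)) /
        ((r : ℝ) - (s : ℝ)) := by
  rw [main_sum]
  rcases Nat.lt_or_ge s r with h | h
  · exact final_lt r s h
  · have h' : r < s := by omega
    rw [tsum_congr fun n : ℕ => by rw [mul_comm (((r:ℝ)+n+1)) (((s:ℝ)+n+1))], final_lt s r h']
    have hne : (r : ℝ) - s ≠ 0 := sub_ne_zero.2 (by exact_mod_cast hrs)
    have hne' : (s : ℝ) - r ≠ 0 := sub_ne_zero.2 (by exact_mod_cast hrs.symm)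
    field_simp
    ring
end

section
/- For nonnegative integers r > s, letting d_r = lcm{1,…,r}, the number d_r² · (H_r - H_s)/(r-s) is a positive integer, where H_n is the n-th harmonic number. -/
theorem dr_sq_harmonic_diff (r s : ℕ) (hrs : s < r) :
    ∃ z : ℕ, 0 < z ∧
      ((Finset.lcm (Finset.Icc 1 r) id : ℕ) : ℝ) ^ 2 *
          (((∑ k ∈ Finset.Icc 1 r, 1 / (k : ℝ)) - ∑ k ∈ Finset.Icc 1 s, 1 / (k : ℝ)) /
            ((r : ℝ) - (s : ℝ))) = (z : ℝ) := by
  set d : ℕ := Finset.lcm (Finset.Icc 1 r) id with hd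
  have hdvd : ∀ k ∈ Finset.Ioc s r, k ∣ d := by
    intro k hk
    simp only [Finset.mem_Ioc] at hk
    exact Finset.dvd_lcm (Finset.mem_Icc.mpr ⟨by omega, hk.2⟩)
  have hdpos : 0 < d := by
    rw [hd]
    apply Nat.pos_of_ne_zero
    intro h
    have := Finset.lcm_eq_zero_iff.mp h
    simp only [Set.mem_image, Finset.mem_coe, Finset.mem_Icc, id] at this
    obtain ⟨x, hx, hx0⟩ := this
    omega
  have hrsd : (r - s) ∣ d := Finset.dvd_lcm (Finset.mem_Icc.mpr ⟨by omega, by omega⟩)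
  set N : ℕ := ∑ k ∈ Finset.Ioc s r, d / k with hN
  refine ⟨(d / (r - s)) * N, ?_, ?_⟩
  · apply Nat.mul_pos
    · exact Nat.div_pos (Nat.le_of_dvd hdpos hrsd) (by omega)
    · apply Finset.sum_pos
      · intro k hk
        exact Nat.div_pos (Nat.le_of_dvd hdpos (hdvd k hk)) (by
          simp only [Finset.mem_Ioc] at hk; omega)
      · exact ⟨r, by simp [Finset.mem_Ioc]; omega⟩
  · have hsum : (∑ k ∈ Finset.Icc 1 r, 1 / (k : ℝ)) - ∑ k ∈ Finset.Icc 1 s, 1 / (k : ℝ)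
        = ∑ k ∈ Finset.Ioc s r, 1 / (k : ℝ) := by
      have h1 : Finset.Icc 1 r = Finset.Ioc 0 r := by ext x; simp [Nat.lt_iff_add_one_le]
      have h2 : Finset.Icc 1 s = Finset.Ioc 0 s := by ext x; simp [Nat.lt_iff_add_one_le]
      rw [h1, h2, sub_eq_iff_eq_add]
      rw [← Finset.sum_Ioc_consecutive _ (Nat.zero_le s) hrs.le]
      ring
    rw [hsum]
    have hcastN : (N : ℝ) = d * ∑ k ∈ Finset.Ioc s r, 1 / (k : ℝ) := by
      rw [hN, Nat.cast_sum, Finset.mul_sum]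
      apply Finset.sum_congr rfl
      intro k hk
      rw [Nat.cast_div (hdvd k hk) (by
        simp only [Finset.mem_Ioc] at hk
        exact_mod_cast (by omega : k ≠ 0))]
      ring
    have hcastrs : ((r : ℝ) - (s : ℝ)) = ((r - s : ℕ) : ℝ) := by
      rw [Nat.cast_sub hrs.le]
    have hcastd : ((d / (r - s) : ℕ) : ℝ) = (d : ℝ) / ((r - s : ℕ) : ℝ) := by
      rw [Nat.cast_div hrsd (by exact_mod_cast (by omega : r - s ≠ 0))]
    push_cast [hcastd, hcastN]
    rw [hcastrs]
    field_simp
end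

section
/- For every natural number n and every n-times continuously differentiable function f : [0,1] → ℝ, ∫₀¹ P_n(x) f(x) dx = ((-1)ⁿ/n!) ∫₀¹ xⁿ(1-x)ⁿ f⁽ⁿ⁾(x) dx. -/
noncomputable def shiftedLegendre (n : ℕ) : ℝ → ℝ :=
  fun x => (1 / (n.factorial : ℝ)) * iteratedDeriv n (fun t : ℝ => t ^ n * (1 - t) ^ n) x

open Polynomial intervalIntegral Set

namespace ShiftedLegendreAux

noncomputable def P (n : ℕ) : ℝ[X] := (X : ℝ[X]) ^ n * (1 - X) ^ n

lemma P_ne_zero (n : ℕ) : P n ≠ 0 := by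
  intro h
  have := congrArg (Polynomial.eval (1/2 : ℝ)) h
  simp [P] at this
  norm_num at this

lemma iteratedDeriv_g (n j : ℕ) :
    iteratedDeriv j (fun t : ℝ => t ^ n * (1 - t) ^ n) =
      fun x => (derivative^[j] (P n)).eval x := by
  induction j with
  | zero => funext x; simp [P]
  | succ j ih =>
      rw [iteratedDeriv_succ, ih]
      funext x
      rw [Function.iterate_succ_apply']
      rw [Polynomial.deriv]

lemma root_zero (n j : ℕ) (hj : j < n) :
    (derivative^[j] (P n)).eval (0 : ℝ) = 0 := by
  apply isRoot_iterate_derivative_of_lt_rootMultiplicity (t := (0:ℝ))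
  refine lt_of_lt_of_le hj ?_
  rw [le_rootMultiplicity_iff (P_ne_zero n)]
  simpa [P] using Dvd.intro _ rfl

lemma root_one (n j : ℕ) (hj : j < n) :
    (derivative^[j] (P n)).eval (1 : ℝ) = 0 := by
  apply isRoot_iterate_derivative_of_lt_rootMultiplicity (t := (1:ℝ))
  refine lt_of_lt_of_le hj ?_
  rw [le_rootMultiplicity_iff (P_ne_zero n)]
  refine Dvd.dvd.mul_left ?_ _
  refine pow_dvd_pow_of_dvd ⟨-1, ?_⟩ n
  rw [Polynomial.C_1]; ring

lemma key (n : ℕ) (f : ℝ → ℝ) (hf : ContDiff ℝ n f) (k : ℕ) (hk : k ≤ n) :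
    (∫ x in (0:ℝ)..1, (derivative^[n] (P n)).eval x * f x) =
      (-1 : ℝ) ^ k *
        ∫ x in (0:ℝ)..1, (derivative^[n - k] (P n)).eval x * iteratedDeriv k f x := by
  induction k with
  | zero => simp [iteratedDeriv_zero]
  | succ k ih =>
      have hk' : k ≤ n := Nat.le_of_succ_le hk
      have hkn : (k : ℕ∞) < n := by exact_mod_cast hk
      have hnk : n - k = (n - (k + 1)) + 1 := by omega
      have hlt : n - (k + 1) < n := by omega
      have step :
          (∫ x in (0:ℝ)..1, (derivative^[n - k] (P n)).eval x * iteratedDeriv k f x) =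
            - ∫ x in (0:ℝ)..1,
                (derivative^[n - (k + 1)] (P n)).eval x * iteratedDeriv (k + 1) f x := by
        have H := integral_mul_deriv_eq_deriv_mul_of_hasDerivAt
          (a := (0:ℝ)) (b := 1)
          (u := fun x => (derivative^[n - (k+1)] (P n)).eval x)
          (v := iteratedDeriv k f)
          (u' := fun x => (derivative^[n - k] (P n)).eval x)
          (v' := iteratedDeriv (k+1) f)
          ((Polynomial.continuous _).continuousOn)
          ((hf.continuous_iteratedDeriv k (by exact_mod_cast hk')).continuousOn)
          (fun x _ => by
            have := Polynomial.hasDerivAt (derivative^[n - (k+1)] (P n)) x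
            rwa [hnk, Function.iterate_succ_apply'])
          (fun x _ => by
            have hd : DifferentiableAt ℝ (iteratedDeriv k f) x :=
              (hf.differentiable_iteratedDeriv k (by exact_mod_cast hkn)) x
            have := hd.hasDerivAt
            rwa [iteratedDeriv_succ])
          ((Polynomial.continuous _).intervalIntegrable 0 1)
          ((hf.continuous_iteratedDeriv (k+1) (by exact_mod_cast hk)).intervalIntegrable 0 1)
        simp only [root_zero n _ hlt, root_one n _ hlt, zero_mul, sub_zero, zero_sub] at H
        linarith [H]
      rw [ih hk', step]
      ring

end ShiftedLegendreAux

theorem shiftedLegendre_integration_by_parts (n : ℕ) (f : ℝ → ℝ) (hf : ContDiff ℝ n f) :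
    (∫ x in (0:ℝ)..1, shiftedLegendre n x * f x) =
      ((-1 : ℝ) ^ n / (n.factorial : ℝ)) *
        ∫ x in (0:ℝ)..1, x ^ n * (1 - x) ^ n * iteratedDeriv n f x := by
  have h0 : (∫ x in (0:ℝ)..1, shiftedLegendre n x * f x) =
      (1 / (n.factorial : ℝ)) *
        ∫ x in (0:ℝ)..1,
          (Polynomial.derivative^[n] (ShiftedLegendreAux.P n)).eval x * f x := by
    rw [← intervalIntegral.integral_const_mul]
    congr 1
    funext x
    rw [_root_.shiftedLegendre, ShiftedLegendreAux.iteratedDeriv_g n n, mul_assoc]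
  rw [h0, ShiftedLegendreAux.key n f hf n le_rfl]
  have h1 : ∀ x : ℝ,
      (Polynomial.derivative^[n - n] (ShiftedLegendreAux.P n)).eval x * iteratedDeriv n f x =
        x ^ n * (1 - x) ^ n * iteratedDeriv n f x := by
    intro x
    simp [ShiftedLegendreAux.P]
  simp only [h1]
  ring
end

section
/- The maximum of g(x,y) = x(1-x)y(1-y)/(1-xy) over [0,1)² equals Φ⁵, where Φ = (√5 - 1)/2 is the inverse golden ratio, attained at x = y = Φ. -/
theorem max_g_unit_square :
    (((Real.sqrt 5 - 1) / 2) * (1 - (Real.sqrt 5 - 1) / 2) * ((Real.sqrt 5 - 1) / 2) *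
        (1 - (Real.sqrt 5 - 1) / 2) / (1 - ((Real.sqrt 5 - 1) / 2) * ((Real.sqrt 5 - 1) / 2))
      = ((Real.sqrt 5 - 1) / 2) ^ 5) ∧
    ∀ x ∈ Set.Ico (0:ℝ) 1, ∀ y ∈ Set.Ico (0:ℝ) 1,
      x * (1 - x) * y * (1 - y) / (1 - x * y) ≤ ((Real.sqrt 5 - 1) / 2) ^ 5 := by
  have h5 : (Real.sqrt 5) ^ 2 = 5 := Real.sq_sqrt (by norm_num)
  have h2 : 2 < Real.sqrt 5 := by nlinarith [Real.sqrt_nonneg 5]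
  have h3 : Real.sqrt 5 < 3 := by nlinarith [Real.sqrt_nonneg 5]
  set s := Real.sqrt 5 with hsdef
  have hphi5 : ((s - 1) / 2) ^ 5 = (5 * s - 11) / 2 := by
    linear_combination ((1:ℝ)/32 * s ^ 3 - 5/32 * s ^ 2 + 15/32 * s - 35/32) * h5
  constructor
  · rw [div_eq_iff (by nlinarith)]
    linear_combination ((1:ℝ)/128 * s ^ 5 - 7/128 * s ^ 4 + 11/64 * s ^ 3 - 21/64 * s ^ 2
      + 41/128 * s - 15/128) * h5
  · intro x hx y hy
    obtain ⟨hx0, hx1⟩ := hx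
    obtain ⟨hy0, hy1⟩ := hy
    have hxy : 0 < 1 - x * y := by nlinarith
    rw [div_le_iff₀ hxy, hphi5]
    nlinarith [sq_nonneg (x - y), sq_nonneg (x + y - (s - 1)), sq_nonneg (2 * x * y - (3 - s)),
      mul_nonneg (mul_nonneg hx0 hy0) (sq_nonneg (x + y - (s - 1))),
      mul_nonneg (mul_nonneg (sub_nonneg.2 hx1.le) (sub_nonneg.2 hy1.le)) (sq_nonneg (x + y - (s - 1))),
      mul_nonneg (mul_nonneg hx0 hy0) (sq_nonneg (x - y)),
      mul_nonneg (mul_nonneg (sub_nonneg.2 hx1.le) (sub_nonneg.2 hy1.le)) (sq_nonneg (x - y)),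
      mul_nonneg hx0 hy0, mul_nonneg (sub_nonneg.2 hx1.le) (sub_nonneg.2 hy1.le),
      mul_nonneg hx0 (sub_nonneg.2 hy1.le), mul_nonneg hy0 (sub_nonneg.2 hx1.le)]
end

section
/- For every x, y ∈ [0,1) one has x(1-x)y(1-y)/(1-xy) ≤ ((√5-1)/2)⁵. -/
theorem g_le_phi_pow_five (x y : ℝ) (hx : x ∈ Set.Ico (0:ℝ) 1) (hy : y ∈ Set.Ico (0:ℝ) 1) :
    x * (1 - x) * y * (1 - y) / (1 - x * y) ≤ ((Real.sqrt 5 - 1) / 2) ^ 5 := by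
  obtain ⟨hx0, hx1⟩ := hx
  obtain ⟨hy0, hy1⟩ := hy
  set s := Real.sqrt 5 with hs
  have hs2 : s ^ 2 = 5 := Real.sq_sqrt (by norm_num)
  have hsl : 2 < s := by
    nlinarith [Real.sq_sqrt (show (0:ℝ) ≤ 5 by norm_num), Real.sqrt_nonneg 5]
  have hsu : s < 9/4 := by
    nlinarith [Real.sq_sqrt (show (0:ℝ) ≤ 5 by norm_num), Real.sqrt_nonneg 5]
  have hpos : (0:ℝ) < 1 - x * y := by nlinarith
  have hc : ((s - 1) / 2) ^ 5 = (5 * s - 11) / 2 := by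
    have h5 : s ^ 5 = (s ^ 2) ^ 2 * s := by ring
    rw [hs2] at h5
    nlinarith [h5]
  rw [hc, div_le_div_iff₀ hpos (by norm_num)]
  nlinarith [sq_nonneg (x - y), sq_nonneg (x + y - s + 1), sq_nonneg (2*x*y - x - y + 3 - s),
    mul_nonneg hx0 hy0, mul_nonneg (sub_nonneg.2 hx1.le) (sub_nonneg.2 hy1.le),
    mul_nonneg (mul_nonneg hx0 hy0) (sq_nonneg (x + y - s + 1)),
    mul_nonneg (mul_nonneg (sub_nonneg.2 hx1.le) (sub_nonneg.2 hy1.le)) (sq_nonneg (x + y - s + 1)),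
    mul_nonneg (mul_nonneg hx0 hy0) (sq_nonneg (x - y)),
    mul_nonneg (mul_nonneg (sub_nonneg.2 hx1.le) (sub_nonneg.2 hy1.le)) (sq_nonneg (x - y)),
    hs2, hsl, hsu]
end

section
/- The double integral -∫₀¹∫₀¹ ln(xy)/(1-xy) dx dy equals 2ζ(3). -/
open MeasureTheory Set Real intervalIntegral



lemma ilog (n : ℕ) : IntervalIntegrable (fun x : ℝ => x ^ n * Real.log x) volume 0 1 := by
  rw [intervalIntegrable_iff_integrableOn_Ioc_of_le zero_le_one]
  have hg : IntegrableOn (fun x : ℝ => 2 * x ^ (-(1:ℝ)/2)) (Ioc 0 1) volume := by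
    have := (intervalIntegrable_rpow' (a := 0) (b := 1) (r := -(1:ℝ)/2) (by norm_num)).const_mul 2
    rwa [intervalIntegrable_iff_integrableOn_Ioc_of_le zero_le_one] at this
  refine Integrable.mono hg ?_ ?_
  · exact ((measurable_id.pow_const n).mul Real.measurable_log).aestronglyMeasurable
  · rw [ae_restrict_iff' measurableSet_Ioc]
    filter_upwards with x hx
    have hx0 : (0:ℝ) < x := hx.1
    have hx1 : x ≤ 1 := hx.2
    have hlog : Real.log x ≤ 0 := Real.log_nonpos hx0.le hx1
    have hb : -Real.log x ≤ 2 * x ^ (-(1:ℝ)/2) := by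
      have h1 : Real.log (x ^ (-(1:ℝ)/2)) ≤ x ^ (-(1:ℝ)/2) - 1 :=
        Real.log_le_sub_one_of_pos (Real.rpow_pos_of_pos hx0 _)
      rw [Real.log_rpow hx0] at h1
      nlinarith [Real.rpow_pos_of_pos hx0 (-(1:ℝ)/2)]
    have hxn : x ^ n ≤ 1 := pow_le_one₀ hx0.le hx1
    have hxn0 : (0:ℝ) ≤ x ^ n := pow_nonneg hx0.le n
    rw [Real.norm_eq_abs, Real.norm_eq_abs, abs_mul, abs_of_nonneg hxn0,
      abs_of_nonpos hlog]
    have h2 : (0:ℝ) < 2 * x ^ (-(1:ℝ)/2) := by positivity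
    rw [abs_of_pos h2]
    nlinarith




lemma Alog (n : ℕ) : ∫ x in (0:ℝ)..1, x ^ n * Real.log x = -(1 / ((n:ℝ)+1)^2) := by
  have hne : ((n:ℝ)+1) ≠ 0 := by positivity
  have key := intervalIntegral.integral_eq_sub_of_hasDerivAt_of_le (f := fun x : ℝ =>
      x ^ (n+1) * Real.log x / ((n:ℝ)+1) - x ^ (n+1) / ((n:ℝ)+1)^2)
      (f' := fun x : ℝ => x ^ n * Real.log x) zero_le_one ?_ ?_ (ilog n)
  · rw [key]; norm_num
  · have : (fun x : ℝ => x ^ (n+1) * Real.log x / ((n:ℝ)+1) - x ^ (n+1) / ((n:ℝ)+1)^2)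
        = fun x : ℝ => (x ^ n * (x * Real.log x)) / ((n:ℝ)+1) - x ^ (n+1) / ((n:ℝ)+1)^2 := by
      funext x; ring
    rw [this]
    exact (((continuous_pow n).mul Real.continuous_mul_log).div_const _ |>.sub
      ((continuous_pow (n+1)).div_const _)).continuousOn
  · intro x hx
    have hx0 : x ≠ 0 := ne_of_gt hx.1
    have h1 : HasDerivAt (fun x : ℝ => x ^ (n+1)) (((n:ℝ)+1) * x ^ n) x := by
      simpa using hasDerivAt_pow (n+1) x
    have h2 : HasDerivAt Real.log x⁻¹ x := Real.hasDerivAt_log hx0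
    have h3 := (h1.mul h2).div_const ((n:ℝ)+1)
    have h4 := h1.div_const (((n:ℝ)+1)^2)
    convert h3.sub h4 using 1
    · rfl
    field_simp
    ring

noncomputable def hfun (n : ℕ) (x : ℝ) : ℝ :=
  x ^ n * (1 / ((n:ℝ)+1)^2 + (-Real.log x) / ((n:ℝ)+1))

lemma ilogOn (n : ℕ) : IntegrableOn (fun x : ℝ => x ^ n * Real.log x) (Ioc 0 1) volume := by
  have := ilog n
  rwa [intervalIntegrable_iff_integrableOn_Ioc_of_le zero_le_one] at this

lemma ipowOn (n : ℕ) : IntegrableOn (fun x : ℝ => x ^ n) (Ioc 0 1) volume :=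
  (continuous_pow n).integrableOn_Ioc

lemma inner_int {x : ℝ} (hx : x ∈ Set.Ioo (0:ℝ) 1) :
    ∫ y in (0:ℝ)..1, Real.log (x * y) / (1 - x * y) = -∑' n : ℕ, hfun n x := by
  have hx0 := hx.1
  have hx1 := hx.2
  set F : ℕ → ℝ → ℝ := fun n y => (-(Real.log x + Real.log y)) * (x ^ n * y ^ n) with hF
  have hFeq : ∀ n, F n = fun y : ℝ =>
      (-(Real.log x) * x ^ n) * y ^ n + (-(x ^ n)) * (y ^ n * Real.log y) := by
    intro n; funext y; simp only [hF]; ring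
  have hint : ∀ n, Integrable (F n) (volume.restrict (Ioc 0 1)) := by
    intro n
    rw [hFeq n]
    exact ((ipowOn n).const_mul _).add ((ilogOn n).const_mul _)
  have hval : ∀ n, ∫ y in Ioc (0:ℝ) 1, F n y = hfun n x := by
    intro n
    rw [← intervalIntegral.integral_of_le zero_le_one, hFeq n]
    rw [intervalIntegral.integral_add (((continuous_pow n).intervalIntegrable _ _).const_mul _)
      ((ilog n).const_mul _), intervalIntegral.integral_const_mul,
      intervalIntegral.integral_const_mul]
    have h1 : ∫ y in (0:ℝ)..1, y ^ n = 1 / ((n:ℝ)+1) := by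
      rw [integral_pow]; norm_num
    have h2 : ∫ y in (0:ℝ)..1, y ^ n * Real.log y = -(1 / ((n:ℝ)+1)^2) := Alog n
    rw [h1, h2, hfun]; ring
  have hnonneg : ∀ n, ∀ y ∈ Ioc (0:ℝ) 1, 0 ≤ F n y := by
    intro n y hy
    have : Real.log x + Real.log y ≤ 0 :=
      add_nonpos (Real.log_nonpos hx0.le hx1.le) (Real.log_nonpos hy.1.le hy.2)
    have hy0 : (0:ℝ) < y := hy.1
    have hp : (0:ℝ) ≤ x ^ n * y ^ n := by positivity
    simp only [hF]
    exact mul_nonneg (by linarith) hp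
  have hnorm : ∀ n, ∫ y in Ioc (0:ℝ) 1, ‖F n y‖ = hfun n x := by
    intro n
    rw [← hval n]
    refine setIntegral_congr_fun measurableSet_Ioc fun y hy => ?_
    exact Real.norm_of_nonneg (hnonneg n y hy)
  have hsummable : Summable fun n => hfun n x := by
    refine Summable.of_nonneg_of_le (fun n => ?_) (fun n => ?_)
      (((summable_geometric_of_lt_one hx0.le hx1).mul_left (1 + (-Real.log x))))
    · have := hnonneg n x ⟨hx0, hx1.le⟩
      rw [← hval n] at *
      exact setIntegral_nonneg measurableSet_Ioc (hnonneg n)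
    · have hxn : (0:ℝ) ≤ x ^ n := by positivity
      have hl : (0:ℝ) ≤ -Real.log x := by
        simpa using neg_nonneg.mpr (Real.log_nonpos hx0.le hx1.le)
      have e1 : 1 / ((n:ℝ)+1)^2 ≤ 1 := by
        rw [div_le_one (by positivity)]; nlinarith [Nat.cast_nonneg (α := ℝ) n]
      have e2 : (-Real.log x) / ((n:ℝ)+1) ≤ -Real.log x := by
        rw [div_le_iff₀ (by positivity)]; nlinarith [Nat.cast_nonneg (α := ℝ) n]
      have : hfun n x ≤ x ^ n * (1 + (-Real.log x)) := by
        rw [hfun]; exact mul_le_mul_of_nonneg_left (by linarith) hxn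
      calc hfun n x ≤ x ^ n * (1 + (-Real.log x)) := this
        _ = (1 + (-Real.log x)) * x ^ n := by ring
  have key := MeasureTheory.integral_tsum_of_summable_integral_norm
      (μ := volume.restrict (Ioc (0:ℝ) 1)) (F := F) hint ?_
  · have hl : ∑' n, ∫ y in Ioc (0:ℝ) 1, F n y = ∑' n, hfun n x := by
      exact tsum_congr hval
    have hr : ∫ y in Ioc (0:ℝ) 1, (∑' n, F n y) =
        ∫ y in Ioc (0:ℝ) 1, -(Real.log (x * y) / (1 - x * y)) := by
      refine setIntegral_congr_fun measurableSet_Ioc fun y hy => ?_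
      have hy0 : 0 < y := hy.1
      have hxy0 : 0 < x * y := mul_pos hx0 hy0
      have hxy1 : x * y < 1 := by nlinarith [hy.2]
      have : ∑' n, F n y = (-(Real.log x + Real.log y)) * ∑' n : ℕ, (x*y) ^ n := by
        rw [← tsum_mul_left]
        exact tsum_congr fun n => by rw [mul_pow]
      rw [this, tsum_geometric_of_lt_one hxy0.le hxy1,
        ← Real.log_mul hx0.ne' hy0.ne', neg_mul, div_eq_mul_inv]
    rw [hl, hr, MeasureTheory.integral_neg] at key
    rw [intervalIntegral.integral_of_le zero_le_one]
    linarith [key]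
  · exact (hsummable.congr fun n => (hnorm n).symm).congr fun n => rfl

theorem beukers_integral_zeta_three :
    -(∫ x in (0:ℝ)..1, ∫ y in (0:ℝ)..1, Real.log (x * y) / (1 - x * y)) =
      2 * ∑' n : ℕ, 1 / ((n : ℝ) + 1) ^ 3 := by
  have hfeq : ∀ n, (fun x : ℝ => hfun n x) = fun x : ℝ =>
      (1 / ((n:ℝ)+1)^2) * x ^ n + (-(1 / ((n:ℝ)+1))) * (x ^ n * Real.log x) := by
    intro n; funext x; rw [hfun]; ring
  have hint : ∀ n, Integrable (fun x => hfun n x) (volume.restrict (Ioo (0:ℝ) 1)) := by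
    intro n
    rw [hfeq n]
    have a1 : IntegrableOn (fun x : ℝ => (1 / ((n:ℝ)+1)^2) * x ^ n) (Ioo 0 1) volume :=
      IntegrableOn.mono_set ((ipowOn n).const_mul _) Ioo_subset_Ioc_self
    have a2 : IntegrableOn (fun x : ℝ => (-(1 / ((n:ℝ)+1))) * (x ^ n * Real.log x))
        (Ioo 0 1) volume :=
      IntegrableOn.mono_set ((ilogOn n).const_mul _) Ioo_subset_Ioc_self
    exact a1.add a2
  have hval : ∀ n, ∫ x in Ioo (0:ℝ) 1, hfun n x = 2 * (1 / ((n:ℝ)+1)^3) := by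
    intro n
    rw [← MeasureTheory.integral_Ioc_eq_integral_Ioo,
      ← intervalIntegral.integral_of_le zero_le_one, hfeq n,
      intervalIntegral.integral_add (((continuous_pow n).intervalIntegrable _ _).const_mul _)
        ((ilog n).const_mul _), intervalIntegral.integral_const_mul,
      intervalIntegral.integral_const_mul, integral_pow, Alog n]
    have hne : ((n:ℝ)+1) ≠ 0 := by positivity
    field_simp
    ring
  have hnonneg : ∀ n, ∀ x ∈ Ioo (0:ℝ) 1, 0 ≤ hfun n x := by
    intro n x hx
    have hl : (0:ℝ) ≤ -Real.log x := neg_nonneg.mpr (Real.log_nonpos hx.1.le hx.2.le)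
    have := hx.1
    rw [hfun]
    positivity
  have hnorm : ∀ n, ∫ x in Ioo (0:ℝ) 1, ‖hfun n x‖ = 2 * (1 / ((n:ℝ)+1)^3) := by
    intro n
    rw [← hval n]
    exact setIntegral_congr_fun measurableSet_Ioo fun x hx =>
      Real.norm_of_nonneg (hnonneg n x hx)
  have psum : Summable (fun n : ℕ => 1 / ((n:ℝ)+1)^3) := by
    have h1 : Summable (fun n : ℕ => 1 / (n:ℝ)^3) :=
      Real.summable_one_div_nat_pow.mpr (by norm_num)
    have h2 := (summable_nat_add_iff 1).mpr h1
    refine h2.congr fun n => ?_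
    push_cast
    ring
  have key := MeasureTheory.integral_tsum_of_summable_integral_norm
      (μ := volume.restrict (Ioo (0:ℝ) 1)) (F := fun n x => hfun n x) hint ?_
  · have hl : ∑' n, ∫ x in Ioo (0:ℝ) 1, hfun n x = 2 * ∑' n : ℕ, 1 / ((n:ℝ)+1)^3 := by
      rw [tsum_congr hval, tsum_mul_left]
    have step1 : ∫ x in (0:ℝ)..1, (∫ y in (0:ℝ)..1, Real.log (x * y) / (1 - x * y)) =
        ∫ x in Ioo (0:ℝ) 1, -∑' n : ℕ, hfun n x := by
      rw [intervalIntegral.integral_of_le zero_le_one,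
        MeasureTheory.integral_Ioc_eq_integral_Ioo]
      exact setIntegral_congr_fun measurableSet_Ioo fun x hx => inner_int hx
    rw [step1, MeasureTheory.integral_neg, neg_neg, ← key, hl]
  · refine (psum.mul_left 2).congr fun n => ?_
    rw [hnorm n]
end

section
/- For every positive integer r, -∫₀¹∫₀¹ xʳyʳ ln(xy)/(1-xy) dx dy = 2ζ(3) - 2∑_{m=1}^{r} 1/m³. -/
open Real MeasureTheory intervalIntegral Set
open scoped ENNReal

lemma cont_pow_mul_log (k : ℕ) (hk : 1 ≤ k) :
    Continuous fun x : ℝ => x ^ k * Real.log x := by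
  have : (fun x : ℝ => x ^ k * Real.log x) = fun x => x ^ (k - 1) * (x * Real.log x) := by
    funext x
    rw [← mul_assoc, ← pow_succ]
    congr 2
    omega
  rw [this]
  exact (continuous_pow _).mul Real.continuous_mul_log

lemma integral_pow_mul_log (k : ℕ) (hk : 1 ≤ k) :
    ∫ x in (0:ℝ)..1, x ^ k * Real.log x = -(1 / ((k : ℝ) + 1) ^ 2) := by
  have hk1 : ((k : ℝ) + 1) ≠ 0 := by positivity
  set F : ℝ → ℝ := fun x => x ^ (k+1) * Real.log x / (k+1) - x ^ (k+1) / ((k:ℝ)+1)^2 with hF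
  have hcont : ContinuousOn F (Set.Icc 0 1) := by
    apply Continuous.continuousOn
    exact (((cont_pow_mul_log (k+1) (by omega)).div_const _).sub
      ((continuous_pow _).div_const _))
  have hderiv : ∀ x ∈ Set.Ioo (0:ℝ) 1, HasDerivAt F (x ^ k * Real.log x) x := by
    intro x hx
    have hx0 : x ≠ 0 := ne_of_gt hx.1
    have h1 : HasDerivAt (fun x : ℝ => x ^ (k+1) * Real.log x)
        (((k:ℝ)+1) * x ^ k * Real.log x + x ^ k) x := by
      have := (hasDerivAt_pow (k+1) x).mul (Real.hasDerivAt_log hx0)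
      refine this.congr_deriv ?_
      simp only [Nat.add_sub_cancel]
      push_cast
      field_simp
      ring
    have h2 : HasDerivAt (fun x : ℝ => x ^ (k+1)) (((k:ℝ)+1) * x ^ k) x := by
      have := hasDerivAt_pow (k+1) x
      simpa using this
    have := (h1.div_const ((k:ℝ)+1)).sub (h2.div_const (((k:ℝ)+1)^2))
    refine this.congr_deriv ?_
    field_simp
    ring
  have hint : IntervalIntegrable (fun x : ℝ => x ^ k * Real.log x) volume 0 1 :=
    (cont_pow_mul_log k hk).intervalIntegrable 0 1
  have := intervalIntegral.integral_eq_sub_of_hasDeriv_right_of_le (by norm_num : (0:ℝ) ≤ 1)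
    hcont (fun x hx => (hderiv x hx).hasDerivWithinAt) hint
  rw [this]
  simp [hF]

lemma contIntegrableIoo {f : ℝ → ℝ} (hf : Continuous f) : IntegrableOn f (Ioo (0:ℝ) 1) volume :=
  (hf.integrableOn_Icc).mono_set Ioo_subset_Icc_self

lemma setint_pow (k : ℕ) : ∫ x in Ioo (0:ℝ) 1, x ^ k = 1/((k:ℝ)+1) := by
  rw [← MeasureTheory.integral_Ioc_eq_integral_Ioo, ← intervalIntegral.integral_of_le (by norm_num : (0:ℝ) ≤ 1)]
  simp [integral_pow]

lemma lintA (k : ℕ) :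
    ∫⁻ x in Ioo (0:ℝ) 1, ENNReal.ofReal (x ^ k) = ENNReal.ofReal (1/((k:ℝ)+1)) := by
  rw [← setint_pow k]
  refine (MeasureTheory.ofReal_integral_eq_lintegral_ofReal (contIntegrableIoo (continuous_pow k)) ?_).symm
  filter_upwards [ae_restrict_mem measurableSet_Ioo] with x hx
  exact pow_nonneg hx.1.le k

lemma lintB (k : ℕ) (hk : 1 ≤ k) :
    ∫⁻ x in Ioo (0:ℝ) 1, ENNReal.ofReal (x ^ k * (-Real.log x)) = ENNReal.ofReal (1/((k:ℝ)+1)^2) := by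
  have hc : Continuous fun x : ℝ => x ^ k * (-Real.log x) := by
    have := (cont_pow_mul_log k hk).neg
    convert this using 2 with x
    simp only [Pi.neg_apply]
    ring
  have hval : ∫ x in Ioo (0:ℝ) 1, x ^ k * (-Real.log x) = 1/((k:ℝ)+1)^2 := by
    rw [← MeasureTheory.integral_Ioc_eq_integral_Ioo,
      ← intervalIntegral.integral_of_le (by norm_num : (0:ℝ) ≤ 1)]
    have : (fun x : ℝ => x ^ k * (-Real.log x)) = fun x => -(x ^ k * Real.log x) := by
      funext x; ring
    rw [this, intervalIntegral.integral_neg, integral_pow_mul_log k hk, neg_neg]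
  rw [← hval]
  refine (MeasureTheory.ofReal_integral_eq_lintegral_ofReal (contIntegrableIoo hc) ?_).symm
  filter_upwards [ae_restrict_mem measurableSet_Ioo] with x hx
  have : Real.log x ≤ 0 := Real.log_nonpos hx.1.le hx.2.le
  have := pow_nonneg hx.1.le k
  exact mul_nonneg this (neg_nonneg.mpr ‹Real.log x ≤ 0›)

lemma key_ptwise (r : ℕ) {x y : ℝ} (hx : x ∈ Ioo (0:ℝ) 1) (hy : y ∈ Ioo (0:ℝ) 1) :
    ENNReal.ofReal (x^r * y^r * (-Real.log (x*y)) / (1 - x*y)) =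
    ∑' n : ℕ, (ENNReal.ofReal (x^(n+r) * (-Real.log x)) * ENNReal.ofReal (y^(n+r)) +
               ENNReal.ofReal (x^(n+r)) * ENNReal.ofReal (y^(n+r) * (-Real.log y))) := by
  obtain ⟨hx0, hx1⟩ := hx
  obtain ⟨hy0, hy1⟩ := hy
  have ht0 : 0 < x * y := mul_pos hx0 hy0
  have ht1 : x * y < 1 := by nlinarith
  have hlx : 0 ≤ -Real.log x := by
    have := Real.log_nonpos hx0.le hx1.le; linarith
  have hly : 0 ≤ -Real.log y := by
    have := Real.log_nonpos hy0.le hy1.le; linarith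
  set C : ℝ := (x*y)^r * (-Real.log x + -Real.log y) with hC
  have hCnn : 0 ≤ C := by positivity
  set u : ℕ → ℝ := fun n => x^(n+r) * (-Real.log x) * y^(n+r) + x^(n+r) * (y^(n+r) * (-Real.log y))
    with hu
  have hun : ∀ n, u n = (x*y)^n * C := by
    intro n
    simp only [hu, hC, mul_pow, pow_add]
    ring
  have hunn : ∀ n, 0 ≤ u n := by
    intro n; rw [hun]; positivity
  have hsum : Summable u := by
    have : Summable (fun n : ℕ => (x*y)^n * C) :=
      (summable_geometric_of_lt_one ht0.le ht1).mul_right C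
    exact this.congr (fun n => (hun n).symm)
  have htsum : ∑' n, u n = x^r * y^r * (-Real.log (x*y)) / (1 - x*y) := by
    have : ∑' n, u n = (∑' n : ℕ, (x*y)^n) * C := by
      rw [← tsum_mul_right]; exact tsum_congr hun
    rw [this, tsum_geometric_of_lt_one ht0.le ht1, hC,
      Real.log_mul (ne_of_gt hx0) (ne_of_gt hy0), mul_pow]
    field_simp
    ring
  calc ENNReal.ofReal (x^r * y^r * (-Real.log (x*y)) / (1 - x*y))
      = ENNReal.ofReal (∑' n, u n) := by rw [htsum]
    _ = ∑' n, ENNReal.ofReal (u n) := ENNReal.ofReal_tsum_of_nonneg hunn hsum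
    _ = _ := by
        refine tsum_congr fun n => ?_
        rw [hu]
        rw [ENNReal.ofReal_add (by positivity) (by positivity),
          ENNReal.ofReal_mul (by positivity), ENNReal.ofReal_mul (by positivity),
          ENNReal.ofReal_mul (by positivity)]

lemma mA (k : ℕ) : Measurable fun t : ℝ => ENNReal.ofReal (t ^ k) :=
  (measurable_id.pow_const k).ennreal_ofReal

lemma mB (k : ℕ) : Measurable fun t : ℝ => ENNReal.ofReal (t ^ k * (-Real.log t)) :=
  ((measurable_id.pow_const k).mul Real.measurable_log.neg).ennreal_ofReal

lemma S_eq (r : ℕ) (hr : 1 ≤ r) :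
    ∫⁻ x in Ioo (0:ℝ) 1, ∫⁻ y in Ioo (0:ℝ) 1,
      ENNReal.ofReal (x^r * y^r * (-Real.log (x*y)) / (1 - x*y)) =
    ∑' n : ℕ, ENNReal.ofReal (2 / (((n+r:ℕ):ℝ)+1)^3) := by
  have step1 : ∫⁻ x in Ioo (0:ℝ) 1, ∫⁻ y in Ioo (0:ℝ) 1,
      ENNReal.ofReal (x^r * y^r * (-Real.log (x*y)) / (1 - x*y)) =
      ∫⁻ x in Ioo (0:ℝ) 1, ∑' n : ℕ,
        (ENNReal.ofReal (x^(n+r) * (-Real.log x)) * ENNReal.ofReal (1/(((n+r:ℕ):ℝ)+1)) +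
         ENNReal.ofReal (x^(n+r)) * ENNReal.ofReal (1/(((n+r:ℕ):ℝ)+1)^2)) := by
    refine setLIntegral_congr_fun measurableSet_Ioo (fun x hx => ?_)
    have inner1 : ∫⁻ y in Ioo (0:ℝ) 1,
        ENNReal.ofReal (x^r * y^r * (-Real.log (x*y)) / (1 - x*y)) =
        ∫⁻ y in Ioo (0:ℝ) 1, ∑' n : ℕ,
          (ENNReal.ofReal (x^(n+r) * (-Real.log x)) * ENNReal.ofReal (y^(n+r)) +
           ENNReal.ofReal (x^(n+r)) * ENNReal.ofReal (y^(n+r) * (-Real.log y))) :=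
      setLIntegral_congr_fun measurableSet_Ioo (fun y hy => key_ptwise r hx hy)
    rw [inner1, lintegral_tsum (fun n => by exact ((((mA (n+r)).const_mul _).add
      ((mB (n+r)).const_mul _))).aemeasurable)]
    refine tsum_congr fun n => ?_
    rw [lintegral_add_left ((mA (n+r)).const_mul _),
      lintegral_const_mul _ (mA (n+r)), lintegral_const_mul _ (mB (n+r)),
      lintA (n+r), lintB (n+r) (by omega)]
  rw [step1, lintegral_tsum (fun n => by exact (((mB (n+r)).mul_const _).add
      ((mA (n+r)).mul_const _)).aemeasurable)]
  refine tsum_congr fun n => ?_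
  rw [lintegral_add_left ((mB (n+r)).mul_const _),
    lintegral_mul_const _ (mB (n+r)), lintegral_mul_const _ (mA (n+r)),
    lintA (n+r), lintB (n+r) (by omega)]
  have h1 : (0:ℝ) < ((n+r:ℕ):ℝ)+1 := by positivity
  rw [← ENNReal.ofReal_mul (by positivity), ← ENNReal.ofReal_mul (by positivity),
    ← ENNReal.ofReal_add (by positivity) (by positivity)]
  congr 1
  field_simp
  ring

lemma summable_base : Summable (fun n : ℕ => 1/((n:ℝ)+1)^3) := by
  have h : Summable (fun n : ℕ => 1/(n:ℝ)^3) :=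
    Real.summable_one_div_nat_pow.mpr (by norm_num)
  have := (summable_nat_add_iff 1).mpr h
  refine this.congr fun n => ?_
  push_cast
  ring_nf
 
lemma summable_shift (r : ℕ) : Summable (fun n : ℕ => 2/(((n+r:ℕ):ℝ)+1)^3) := by
  have := ((summable_nat_add_iff r).mpr summable_base).mul_left 2
  refine this.congr fun n => ?_
  push_cast
  ring_nf

lemma fmeas (r : ℕ) : Measurable (fun p : ℝ × ℝ =>
    p.1^r * p.2^r * (-Real.log (p.1*p.2)) / (1 - p.1*p.2)) := by
  have hlog : Measurable fun p : ℝ × ℝ => Real.log (p.1 * p.2) :=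
    Real.measurable_log.comp (measurable_fst.mul measurable_snd)
  exact (((measurable_fst.pow_const r).mul (measurable_snd.pow_const r)).mul hlog.neg).div
    (measurable_const.sub (measurable_fst.mul measurable_snd))

lemma conv (r : ℕ) (hr : 1 ≤ r) :
    ∫ x in (0:ℝ)..1, ∫ y in (0:ℝ)..1, x^r*y^r*(-Real.log (x*y))/(1-x*y)
      = ∑' n : ℕ, 2/(((n+r:ℕ):ℝ)+1)^3 := by
  set f : ℝ → ℝ → ℝ := fun x y => x^r*y^r*(-Real.log (x*y))/(1-x*y) with hf
  set F : ℝ → ℝ → ℝ≥0∞ := fun x y => ENNReal.ofReal (f x y) with hF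
  have hFmeas : Measurable (fun p : ℝ × ℝ => F p.1 p.2) := (fmeas r).ennreal_ofReal
  have hFm1 : ∀ x, Measurable (F x) := fun x =>
    hFmeas.comp (measurable_const.prodMk measurable_id)
  have hinner_meas : Measurable fun x => ∫⁻ y in Ioo (0:ℝ) 1, F x y :=
    Measurable.lintegral_prod_right' (f := fun p : ℝ × ℝ => F p.1 p.2) hFmeas
  have hfnn : ∀ x ∈ Ioo (0:ℝ) 1, ∀ y ∈ Ioo (0:ℝ) 1, 0 ≤ f x y := by
    intro x hx y hy
    have hxy0 : 0 < x * y := mul_pos hx.1 hy.1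
    have hxy1 : x * y < 1 := by nlinarith [hx.1, hx.2, hy.1, hy.2]
    have h1 : 0 ≤ -Real.log (x*y) := by
      have := Real.log_nonpos hxy0.le hxy1.le; linarith
    have h2 : 0 ≤ 1 - x*y := by linarith
    have h3 : 0 ≤ x^r*y^r := mul_nonneg (pow_nonneg hx.1.le r) (pow_nonneg hy.1.le r)
    exact div_nonneg (mul_nonneg h3 h1) h2
  -- inner equality for x in Ioo
  have hinner : ∀ x ∈ Ioo (0:ℝ) 1,
      ∫ y in (0:ℝ)..1, f x y = (∫⁻ y in Ioo (0:ℝ) 1, F x y).toReal := by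
    intro x hx
    rw [intervalIntegral.integral_of_le (by norm_num : (0:ℝ) ≤ 1),
      MeasureTheory.integral_Ioc_eq_integral_Ioo]
    refine MeasureTheory.integral_eq_lintegral_of_nonneg_ae ?_ ?_
    · filter_upwards [ae_restrict_mem measurableSet_Ioo] with y hy
      exact hfnn x hx y hy
    · exact ((fmeas r).comp (measurable_const.prodMk measurable_id)).aestronglyMeasurable
  -- S and finiteness
  have hS := S_eq r hr
  have hSofReal : ∑' n : ℕ, ENNReal.ofReal (2 / (((n+r:ℕ):ℝ)+1)^3)
      = ENNReal.ofReal (∑' n : ℕ, 2 / (((n+r:ℕ):ℝ)+1)^3) :=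
    (ENNReal.ofReal_tsum_of_nonneg (fun n => by positivity) (summable_shift r)).symm
  have hSfin : ∫⁻ x in Ioo (0:ℝ) 1, ∫⁻ y in Ioo (0:ℝ) 1, F x y ≠ ⊤ := by
    rw [hS, hSofReal]; exact ENNReal.ofReal_ne_top
  have hae : ∀ᵐ x ∂(volume.restrict (Ioo (0:ℝ) 1)),
      (∫⁻ y in Ioo (0:ℝ) 1, F x y) < ⊤ := ae_lt_top hinner_meas hSfin
  calc ∫ x in (0:ℝ)..1, ∫ y in (0:ℝ)..1, f x y
      = ∫ x in Ioo (0:ℝ) 1, ∫ y in (0:ℝ)..1, f x y := by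
        rw [intervalIntegral.integral_of_le (by norm_num : (0:ℝ) ≤ 1),
          MeasureTheory.integral_Ioc_eq_integral_Ioo]
    _ = ∫ x in Ioo (0:ℝ) 1, (∫⁻ y in Ioo (0:ℝ) 1, F x y).toReal := by
        refine setIntegral_congr_fun measurableSet_Ioo fun x hx => hinner x hx
    _ = (∫⁻ x in Ioo (0:ℝ) 1, ENNReal.ofReal ((∫⁻ y in Ioo (0:ℝ) 1, F x y).toReal)).toReal := by
        refine MeasureTheory.integral_eq_lintegral_of_nonneg_ae ?_ ?_
        · exact ae_of_all _ fun x => ENNReal.toReal_nonneg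
        · exact hinner_meas.ennreal_toReal.aestronglyMeasurable
    _ = (∫⁻ x in Ioo (0:ℝ) 1, ∫⁻ y in Ioo (0:ℝ) 1, F x y).toReal := by
        congr 1
        refine lintegral_congr_ae ?_
        filter_upwards [hae] with x hx
        exact ENNReal.ofReal_toReal hx.ne
    _ = ∑' n : ℕ, 2/(((n+r:ℕ):ℝ)+1)^3 := by
        rw [hS, hSofReal, ENNReal.toReal_ofReal]
        exact tsum_nonneg fun n => by positivity

lemma hIcc_lemma (r : ℕ) : ∑ i ∈ Finset.range r, 1/((i:ℝ)+1)^3 = ∑ m ∈ Finset.Icc 1 r, 1 / (m : ℝ) ^ 3 := by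
  induction r with
  | zero => simp
  | succ n ih =>
      rw [Finset.sum_range_succ, ih, Finset.sum_Icc_succ_top (by omega)]
      push_cast
      ring

theorem beukers_Jrr (r : ℕ) (hr : 0 < r) :
    -(∫ x in (0:ℝ)..1, ∫ y in (0:ℝ)..1, x ^ r * y ^ r * Real.log (x * y) / (1 - x * y)) =
      2 * (∑' n : ℕ, 1 / ((n : ℝ) + 1) ^ 3) - 2 * ∑ m ∈ Finset.Icc 1 r, 1 / (m : ℝ) ^ 3 := by
  have hneg : -(∫ x in (0:ℝ)..1, ∫ y in (0:ℝ)..1, x ^ r * y ^ r * Real.log (x * y) / (1 - x * y))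
      = ∫ x in (0:ℝ)..1, ∫ y in (0:ℝ)..1, x^r*y^r*(-Real.log (x*y))/(1-x*y) := by
    rw [← intervalIntegral.integral_neg]
    congr 1
    funext x
    rw [← intervalIntegral.integral_neg]
    congr 1
    funext y
    ring
  rw [hneg, conv r hr]
  have hsplit := Summable.sum_add_tsum_nat_add r summable_base
  have hIcc := hIcc_lemma r
  have htail : ∑' n : ℕ, 2/(((n+r:ℕ):ℝ)+1)^3 = 2 * ∑' n : ℕ, 1/(((n+r:ℕ):ℝ)+1)^3 := by
    rw [← tsum_mul_left]
    refine tsum_congr fun n => ?_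
    ring
  rw [htail, ← hsplit, hIcc]
  push_cast
  ring
end

section
/- For all s, t ∈ (0,1), ∫₀¹ du/(1-(1-(1-s)t)u) = ∫₀¹ du/([1-(1-u)s][1-(1-t)u]), both equal to -ln((1-s)t)/(1-(1-s)t). -/
open intervalIntegral Real

lemma int_lin (b c : ℝ) (hb : b ≠ 0) (h : ∀ u ∈ Set.Icc (0:ℝ) 1, 0 < c + b * u) :
    ∫ u in (0:ℝ)..1, 1 / (c + b * u) = (Real.log (c + b) - Real.log c) / b := by
  have huIcc : Set.uIcc (0:ℝ) 1 = Set.Icc 0 1 := Set.uIcc_of_le zero_le_one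
  have hne : ∀ u ∈ Set.uIcc (0:ℝ) 1, c + b * u ≠ 0 := by
    intro u hu; rw [huIcc] at hu; exact (h u hu).ne'
  have hcont : ContinuousOn (fun u : ℝ => 1 / (c + b * u)) (Set.uIcc 0 1) := by
    apply ContinuousOn.div continuousOn_const
    · exact (continuous_const.add (continuous_const.mul continuous_id)).continuousOn
    · exact hne
  have hderiv : ∀ u ∈ Set.uIcc (0:ℝ) 1,
      HasDerivAt (fun u : ℝ => Real.log (c + b * u) / b) (1 / (c + b * u)) u := by
    intro u hu
    have h1 : HasDerivAt (fun u : ℝ => c + b * u) b u := by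
      simpa using ((hasDerivAt_id u).const_mul b).const_add c
    have h2 := (h1.log (hne u hu)).div_const b
    have : b / (c + b * u) / b = 1 / (c + b * u) := by
      rw [div_div, mul_comm, ← div_div, div_self hb]
    rwa [this] at h2
  have := intervalIntegral.integral_eq_sub_of_hasDerivAt hderiv hcont.intervalIntegrable
  rw [this]
  simp [sub_div]

theorem partial_fraction_integration (s t : ℝ) (hs : s ∈ Set.Ioo (0:ℝ) 1)
    (ht : t ∈ Set.Ioo (0:ℝ) 1) :
    (∫ u in (0:ℝ)..1, 1 / (1 - (1 - (1 - s) * t) * u)) =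
        -Real.log ((1 - s) * t) / (1 - (1 - s) * t) ∧
    (∫ u in (0:ℝ)..1, 1 / ((1 - (1 - u) * s) * (1 - (1 - t) * u))) =
        -Real.log ((1 - s) * t) / (1 - (1 - s) * t) := by
  obtain ⟨hs0, hs1⟩ := hs
  obtain ⟨ht0, ht1⟩ := ht
  set a : ℝ := 1 - (1 - s) * t with ha_def
  have hst : 0 < (1 - s) * t := mul_pos (by linarith) ht0
  have hst1 : (1 - s) * t < 1 := by nlinarith
  have ha0 : 0 < a := by simp [ha_def]; linarith
  have ha1 : a < 1 := by simp [ha_def]; linarith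
  have ha_ne : a ≠ 0 := ne_of_gt ha0
  clear_value a
  have huIcc : Set.uIcc (0:ℝ) 1 = Set.Icc 0 1 := Set.uIcc_of_le zero_le_one
  constructor
  · have h1 : ∫ u in (0:ℝ)..1, 1 / (1 + (-a) * u)
        = (Real.log (1 + (-a)) - Real.log 1) / (-a) := by
      apply int_lin _ _ (by linarith)
      intro u hu; obtain ⟨hu0, hu1⟩ := hu; nlinarith
    have heq : ∀ u : ℝ, 1 - a * u = 1 + (-a) * u := by intro u; ring
    simp only [heq]
    rw [h1]
    have : (1 : ℝ) + (-a) = (1 - s) * t := by simp [ha_def]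
    rw [this, Real.log_one, sub_zero, div_neg, neg_div]
  · -- partial fractions
    have hA : ∀ u ∈ Set.Icc (0:ℝ) 1, 0 < (1 - s) + s * u := by
      intro u hu; obtain ⟨hu0, hu1⟩ := hu; nlinarith
    have hB : ∀ u ∈ Set.Icc (0:ℝ) 1, 0 < 1 + (-(1 - t)) * u := by
      intro u hu; obtain ⟨hu0, hu1⟩ := hu; nlinarith
    have hIA : ∫ u in (0:ℝ)..1, 1 / ((1 - s) + s * u)
        = (Real.log ((1 - s) + s) - Real.log (1 - s)) / s :=
      int_lin _ _ (by linarith) hA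
    have hIB : ∫ u in (0:ℝ)..1, 1 / (1 + (-(1 - t)) * u)
        = (Real.log (1 + (-(1 - t))) - Real.log 1) / (-(1 - t)) :=
      int_lin _ _ (by linarith) hB
    have hintA : IntervalIntegrable (fun u : ℝ => s / a * (1 / ((1 - s) + s * u)))
        MeasureTheory.volume 0 1 := by
      apply ContinuousOn.intervalIntegrable
      apply ContinuousOn.mul continuousOn_const
      apply ContinuousOn.div continuousOn_const
      · exact (continuous_const.add (continuous_const.mul continuous_id)).continuousOn
      · intro u hu; rw [huIcc] at hu; exact (hA u hu).ne'
    have hintB : IntervalIntegrable (fun u : ℝ => (1 - t) / a * (1 / (1 + (-(1 - t)) * u)))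
        MeasureTheory.volume 0 1 := by
      apply ContinuousOn.intervalIntegrable
      apply ContinuousOn.mul continuousOn_const
      apply ContinuousOn.div continuousOn_const
      · exact (continuous_const.add (continuous_const.mul continuous_id)).continuousOn
      · intro u hu; rw [huIcc] at hu; exact (hB u hu).ne'
    have hcongr : ∫ u in (0:ℝ)..1, 1 / ((1 - (1 - u) * s) * (1 - (1 - t) * u))
        = ∫ u in (0:ℝ)..1, (s / a * (1 / ((1 - s) + s * u))
            + (1 - t) / a * (1 / (1 + (-(1 - t)) * u))) := by
      apply intervalIntegral.integral_congr
      intro u hu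
      rw [huIcc] at hu
      dsimp only
      have h1 := hA u hu
      have h2 := hB u hu
      have e1 : 1 - (1 - u) * s = (1 - s) + s * u := by ring
      have e2 : 1 - (1 - t) * u = 1 + (-(1 - t)) * u := by ring
      have h1' := h1.ne'
      have h2' := h2.ne'
      rw [e1, e2, div_mul_div_comm, div_mul_div_comm, mul_one, mul_one,
        div_add_div _ _ (mul_ne_zero ha_ne h1') (mul_ne_zero ha_ne h2'),
        div_eq_div_iff (mul_ne_zero h1' h2')
          (mul_ne_zero (mul_ne_zero ha_ne h1') (mul_ne_zero ha_ne h2'))]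
      linear_combination (a * (1 - s + s * u) * (1 + -(1 - t) * u)) * ha_def
    rw [hcongr, intervalIntegral.integral_add hintA hintB,
      intervalIntegral.integral_const_mul, intervalIntegral.integral_const_mul, hIA, hIB]
    have e3 : (1 : ℝ) - s + s = 1 := by ring
    have e4 : (1 : ℝ) + (-(1 - t)) = t := by ring
    rw [e3, e4, Real.log_one,
      Real.log_mul (by linarith : (1:ℝ) - s ≠ 0) (by linarith : t ≠ 0)]
    have h1t : (1:ℝ) - t ≠ 0 := by linarith
    rw [sub_zero, zero_sub, div_neg, neg_div, neg_div]
    field_simp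
    ring
end

section
/- The function g(x,y,z) = x(1-x)y(1-y)z(1-z)/([1-(1-z)x](1-yz)) on [0,1)³ attains its maximum value 17 - 12√2 at the point (2-√2, 2-√2, 1/2); in particular g(x,y,z) ≤ 17 - 12√2 for all (x,y,z) ∈ [0,1)³. -/
theorem max_g_unit_cube :
    ((2 - Real.sqrt 2) * (1 - (2 - Real.sqrt 2)) * (2 - Real.sqrt 2) *
        (1 - (2 - Real.sqrt 2)) * (1 / 2 : ℝ) * (1 - 1 / 2) /
        ((1 - (1 - 1 / 2) * (2 - Real.sqrt 2)) * (1 - (2 - Real.sqrt 2) * (1 / 2)))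
      = 17 - 12 * Real.sqrt 2) ∧
    ∀ x ∈ Set.Ico (0:ℝ) 1, ∀ y ∈ Set.Ico (0:ℝ) 1, ∀ z ∈ Set.Ico (0:ℝ) 1,
      x * (1 - x) * y * (1 - y) * z * (1 - z) /
          ((1 - (1 - z) * x) * (1 - y * z)) ≤ 17 - 12 * Real.sqrt 2 := by
  have hs2 : Real.sqrt 2 ^ 2 = 2 := Real.sq_sqrt (by norm_num)
  have hs0 : 0 ≤ Real.sqrt 2 := Real.sqrt_nonneg 2
  set s := Real.sqrt 2 with hsdef
  have hs1 : 1 ≤ s := by nlinarith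
  have hs15 : s ≤ 3/2 := by nlinarith
  have h17 : 0 ≤ 17 - 12*s := by nlinarith [sq_nonneg (12*s - 17)]
  constructor
  · have hden : (1 - (1 - 1/2:ℝ) * (2 - s)) * (1 - (2 - s) * (1/2)) = 1/2 := by
      linear_combination (1/4) * hs2
    rw [hden]
    rw [div_eq_iff (by norm_num : (1/2:ℝ) ≠ 0)]
    linear_combination ((s^2 - 6*s + 15)/4) * hs2
  · rintro x ⟨hx0, hx1⟩ y ⟨hy0, hy1⟩ z ⟨hz0, hz1⟩
    have ht0 : 0 ≤ Real.sqrt z := Real.sqrt_nonneg z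
    have ht2 : Real.sqrt z ^ 2 = z := Real.sq_sqrt hz0
    set t := Real.sqrt z with htdef
    have hu0 : 0 ≤ Real.sqrt (1-z) := Real.sqrt_nonneg _
    have hu2 : Real.sqrt (1-z) ^ 2 = 1 - z := Real.sq_sqrt (by linarith)
    set u := Real.sqrt (1-z) with hudef
    have htu1 : t^2 + u^2 = 1 := by rw [ht2, hu2]; ring
    have hD1 : 0 < 1 - (1-z)*x := by nlinarith
    have hD2 : 0 < 1 - y*z := by nlinarith
    rw [div_le_iff₀ (by positivity)]
    -- per-variable bounds
    have h1 : x*(1-x)*(1+t)^2 ≤ 1 - (1-z)*x := by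
      nlinarith [sq_nonneg ((1+t)*x - 1), ht2]
    have h2 : y*(1-y)*(1+u)^2 ≤ 1 - y*z := by
      nlinarith [sq_nonneg ((1+u)*y - 1), hu2]
    -- key inequality in t, u
    have hp : t + u ≤ s := by
      have hsq : (t+u)^2 ≤ s^2 := by nlinarith [sq_nonneg (t-u)]
      calc t + u = Real.sqrt ((t+u)^2) := (Real.sqrt_sq (by linarith)).symm
        _ ≤ Real.sqrt (s^2) := Real.sqrt_le_sqrt hsq
        _ = s := Real.sqrt_sq hs0
    have hq : t*u ≤ (3-2*s)*((1+t)*(1+u)) := by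
      have hP : 0 ≤ (1+t+u)*((s-1)*(s-(t+u))) :=
        mul_nonneg (by linarith) (mul_nonneg (by linarith) (by linarith))
      have hid : (3-2*s)*((1+t)*(1+u)) - t*u = (1+t+u)*((s-1)*(s-(t+u))) := by
        linear_combination (-(1+t+u))*hs2 + (s-1)*htu1
      linarith [hP, hid]
    have hkey : t^2*u^2 ≤ (17-12*s)*((1+t)*(1+u))^2 := by
      have hq0 : (0:ℝ) ≤ (3-2*s)*((1+t)*(1+u)) :=
        mul_nonneg (by linarith) (mul_nonneg (by linarith) (by linarith))
      have hsq := mul_le_mul hq hq (mul_nonneg ht0 hu0) hq0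
      have hE : (3-2*s)*((1+t)*(1+u)) * ((3-2*s)*((1+t)*(1+u)))
          = (17-12*s)*((1+t)*(1+u))^2 := by
        linear_combination (4*((1+t)*(1+u))^2)*hs2
      have hF : t^2*u^2 = t*u*(t*u) := by ring
      linarith [hsq, hE, hF]
    have hA : 0 ≤ x*(1-x) := mul_nonneg hx0 (by linarith)
    have hB : 0 ≤ y*(1-y) := mul_nonneg hy0 (by linarith)
    calc x * (1 - x) * y * (1 - y) * z * (1 - z)
        = (x*(1-x))*(y*(1-y))*(t^2*u^2) := by rw [ht2, hu2]; ring
      _ ≤ (x*(1-x))*(y*(1-y))*((17-12*s)*((1+t)*(1+u))^2) :=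
          mul_le_mul_of_nonneg_left hkey (mul_nonneg hA hB)
      _ = (17-12*s) * ((x*(1-x)*(1+t)^2) * (y*(1-y)*(1+u)^2)) := by ring
      _ ≤ (17-12*s) * ((1 - (1-z)*x) * (1 - y*z)) := by
          apply mul_le_mul_of_nonneg_left _ h17
          exact mul_le_mul h1 h2 (mul_nonneg hB (sq_nonneg _)) hD1.le
end
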